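/- Conic weak-duality bound: let g ∈ ℝ^p, B_b > 0, and for k = 1,...,K let A_k be symmetric positive definite, a_k ∈ ℝ^p, d_k ≥ 0. Then sup{ g^T β : β^T β ≤ B_b^2, ‖A_k β‖_2 ≤ a_k^T β + d_k for all k } ≤ ‖g‖_2 · Σ_{k=1}^K (B_b‖a_k‖_2 + d_k)/(K·λ_min(A_k)). -/

import Mathlib

open Matrix BigOperators

lemma dot_cs {p : ℕ} (x y : Fin p → ℝ) :
    x ⬝ᵥ y ≤ Real.sqrt (x ⬝ᵥ x) * Real.sqrt (y ⬝ᵥ y) := by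
  simpa [dotProduct, sq] using
    Real.sum_mul_le_sqrt_mul_sqrt Finset.univ x y

lemma dot_self_nonneg {p : ℕ} (x : Fin p → ℝ) : 0 ≤ x ⬝ᵥ x :=
  Finset.sum_nonneg fun i _ => mul_self_nonneg _

lemma rayleigh {p : ℕ} [Nonempty (Fin p)] {A : Matrix (Fin p) (Fin p) ℝ}
    (hA : A.IsHermitian) (x : Fin p → ℝ) :
    (⨅ i, hA.eigenvalues i) * (x ⬝ᵥ x) ≤ x ⬝ᵥ A *ᵥ x := by
  classical
  set U := (hA.eigenvectorUnitary : Matrix (Fin p) (Fin p) ℝ) with hU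
  set y := star U *ᵥ x with hy
  have hUU : U * star U = 1 := (Matrix.mem_unitaryGroup_iff).mp hA.eigenvectorUnitary.2
  have hUx : U *ᵥ y = x := by
    rw [hy, mulVec_mulVec, hUU, one_mulVec]
  have hstar : star U = Uᵀ := by
    rw [Matrix.star_eq_conjTranspose, Matrix.conjTranspose_eq_transpose_of_trivial]
  have hdot : ∀ w : Fin p → ℝ, x ⬝ᵥ (U *ᵥ w) = y ⬝ᵥ w := by
    intro w
    rw [Matrix.dotProduct_mulVec, hy, hstar, Matrix.mulVec_transpose]
  have hAx : x ⬝ᵥ A *ᵥ x = ∑ i, hA.eigenvalues i * (y i * y i) := by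
    conv_lhs => rw [hA.spectral_theorem, Unitary.conjStarAlgAut_apply]
    rw [← Matrix.mulVec_mulVec, ← Matrix.mulVec_mulVec, ← hy, hdot]
    simp [dotProduct, Matrix.mulVec_diagonal, mul_comm, mul_assoc, mul_left_comm]
  have hxx : x ⬝ᵥ x = y ⬝ᵥ y := by
    have : x ⬝ᵥ (U *ᵥ y) = y ⬝ᵥ y := hdot y
    rwa [hUx] at this
  rw [hAx, hxx, dotProduct, Finset.mul_sum]
  refine Finset.sum_le_sum fun i _ => ?_
  exact mul_le_mul_of_nonneg_right (ciInf_le (Finite.bddBelow_range _) i) (mul_self_nonneg _)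

/-- Conic weak-duality bound: if β satisfies βᵀβ ≤ B_b² and the second-order cone
constraints ‖A_kβ‖₂ ≤ a_kᵀβ + d_k, then
gᵀβ ≤ ‖g‖₂ · Σ_k (B_b‖a_k‖₂ + d_k)/(K·λ_min(A_k)),
where λ_min(A_k) = ⨅ i (eigenvalues of A_k). -/
theorem stmt17 {p K : ℕ} (hp : 0 < p) (hK : 0 < K)
    (g : Fin p → ℝ) (Bb : ℝ) (hBb : 0 < Bb)
    (A : Fin K → Matrix (Fin p) (Fin p) ℝ) (hA : ∀ k, (A k).PosDef)
    (a : Fin K → Fin p → ℝ) (d : Fin K → ℝ) (hd : ∀ k, 0 ≤ d k) :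
    haveI : Nonempty (Fin p) := Fin.pos_iff_nonempty.mp hp
    ∀ β : Fin p → ℝ, β ⬝ᵥ β ≤ Bb ^ 2 →
      (∀ k, Real.sqrt ((A k).mulVec β ⬝ᵥ (A k).mulVec β) ≤ a k ⬝ᵥ β + d k) →
      g ⬝ᵥ β ≤ Real.sqrt (g ⬝ᵥ g) *
        ∑ k, (Bb * Real.sqrt (a k ⬝ᵥ a k) + d k) /
          ((K : ℝ) * ⨅ i, (hA k).1.eigenvalues i) := by
  haveI : Nonempty (Fin p) := Fin.pos_iff_nonempty.mp hp
  intro β hβ hcone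
  set nb := Real.sqrt (β ⬝ᵥ β) with hnb
  have hnb0 : 0 ≤ nb := Real.sqrt_nonneg _
  have hnbsq : nb * nb = β ⬝ᵥ β := Real.mul_self_sqrt (dot_self_nonneg β)
  have hnbBb : nb ≤ Bb := by
    rw [hnb]
    calc Real.sqrt (β ⬝ᵥ β) ≤ Real.sqrt (Bb ^ 2) := Real.sqrt_le_sqrt hβ
    _ = Bb := by rw [Real.sqrt_sq hBb.le]
  have hlam : ∀ k, 0 < ⨅ i, (hA k).1.eigenvalues i := by
    intro k
    obtain ⟨i, hi⟩ := Finite.exists_min ((hA k).1.eigenvalues)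
    have h1 : (hA k).1.eigenvalues i ≤ ⨅ j, (hA k).1.eigenvalues j := le_ciInf hi
    exact lt_of_lt_of_le ((hA k).eigenvalues_pos i) h1
  have key : ∀ k, nb * (⨅ i, (hA k).1.eigenvalues i) ≤ Bb * Real.sqrt (a k ⬝ᵥ a k) + d k := by
    intro k
    set lam := ⨅ i, (hA k).1.eigenvalues i with hlamdef
    have hRHS : 0 ≤ Bb * Real.sqrt (a k ⬝ᵥ a k) + d k :=
      add_nonneg (mul_nonneg hBb.le (Real.sqrt_nonneg _)) (hd k)
    rcases eq_or_lt_of_le hnb0 with h0 | h0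
    · rw [← h0, zero_mul]; exact hRHS
    have h1 : lam * (β ⬝ᵥ β) ≤ β ⬝ᵥ (A k) *ᵥ β := rayleigh (hA k).1 β
    have h2 : β ⬝ᵥ (A k) *ᵥ β ≤ nb * Real.sqrt ((A k).mulVec β ⬝ᵥ (A k).mulVec β) :=
      dot_cs β _
    have h3 : a k ⬝ᵥ β ≤ Real.sqrt (a k ⬝ᵥ a k) * nb := dot_cs (a k) β
    have h4 : Real.sqrt ((A k).mulVec β ⬝ᵥ (A k).mulVec β) ≤
        Real.sqrt (a k ⬝ᵥ a k) * Bb + d k := by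
      refine (hcone k).trans (add_le_add_left (h3.trans ?_) _)
      exact mul_le_mul_of_nonneg_left hnbBb (Real.sqrt_nonneg _)
    have h5 : lam * (nb * nb) ≤ nb * (Real.sqrt (a k ⬝ᵥ a k) * Bb + d k) := by
      rw [hnbsq]
      exact h1.trans (h2.trans (mul_le_mul_of_nonneg_left h4 hnb0))
    nlinarith [h5, h0]
  calc g ⬝ᵥ β ≤ Real.sqrt (g ⬝ᵥ g) * nb := dot_cs g β
  _ = Real.sqrt (g ⬝ᵥ g) * ∑ _k : Fin K, nb / K := by
      rw [Finset.sum_const, Finset.card_univ, Fintype.card_fin, nsmul_eq_mul,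
        mul_div_cancel₀]
      exact Nat.cast_ne_zero.mpr hK.ne'
  _ ≤ _ := by
      refine mul_le_mul_of_nonneg_left (Finset.sum_le_sum fun k _ => ?_) (Real.sqrt_nonneg _)
      have hl := hlam k
      rw [div_le_div_iff₀ (by exact_mod_cast hK) (by positivity)]
      have := key k
      nlinarith [hl, (Nat.cast_pos.mpr hK : (0:ℝ) < K)]
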